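/- The number of connected components of the fibered product Ξ_{\vec{s}} = {(μ_1,…,μ_l;λ) ∈ ℂ^{l+1} : μ_j^{s_j} = λ for j = 1,…,l}, for positive integers s_1,…,s_l, equals the number of orbits of the group (ℤ/s_1ℤ) ⊕ ⋯ ⊕ (ℤ/s_lℤ) under the action generated by the diagonal translation (e_1,…,e_l) ↦ (e_1+1,…,e_l+1). More precisely, two points of Ξ_{\vec{s}} with λ ≠ 0 lie in the same connected component iff the tuples of choices of s_j-th roots differ by this diagonal action, so topologically Ξ_{\vec{s}} is a wedge of n copies of ℂ glued at the origin, where n is that orbit count. -/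

import Mathlib

open Complex


private lemma aux_zpow_val {s : ℕ} [NeZero s] {ζ : ℂ} (hζ : IsPrimitiveRoot ζ s) (k : ℤ) :
    ζ ^ (((k : ZMod s)).val : ℤ) = ζ ^ k := by
  have hne : ζ ≠ 0 := hζ.ne_zero (NeZero.ne s)
  have hv : (((k : ZMod s)).val : ℤ) = k % s := ZMod.val_intCast k
  rw [hv]
  conv_rhs => rw [← Int.emod_add_mul_ediv k s]
  rw [zpow_add₀ hne, zpow_mul, zpow_natCast, hζ.pow_eq_one, one_zpow, mul_one]

private lemma aux_val_cast {s : ℕ} [NeZero s] (e : ZMod s) : (((e.val : ℤ)) : ZMod s) = e := by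
  push_cast
  rw [ZMod.natCast_val, ZMod.cast_id]

private lemma aux_shift {s : ℕ} [NeZero s] {ζ : ℂ} (hζ : IsPrimitiveRoot ζ s) (e : ZMod s)
    (m : ℤ) : ζ ^ (((e + (m : ZMod s)).val : ℤ)) = ζ ^ ((e.val : ℤ)) * ζ ^ m := by
  have hne : ζ ≠ 0 := hζ.ne_zero (NeZero.ne s)
  have h1 : e + (m : ZMod s) = (((e.val : ℤ) + m : ℤ) : ZMod s) := by
    rw [Int.cast_add, aux_val_cast]
  rw [h1, aux_zpow_val hζ, zpow_add₀ hne]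

private lemma aux_val_inj {s : ℕ} [NeZero s] {ζ : ℂ} (hζ : IsPrimitiveRoot ζ s) {a b : ZMod s}
    (h : ζ ^ ((a.val : ℤ)) = ζ ^ ((b.val : ℤ))) : a = b := by
  have : a.val = b.val := by
    refine hζ.pow_inj (ZMod.val_lt a) (ZMod.val_lt b) ?_
    have := h
    rw [zpow_natCast, zpow_natCast] at this
    exact this
  exact ZMod.val_injective _ this



/-- The number of orbits of the diagonal translation action of `ℤ` on `∏ j, ZMod (s j)`. -/
noncomputable def diagOrbitCount (l : ℕ) (s : Fin l → ℕ) : ℕ :=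
  Nat.card (Quot (fun e₁ e₂ : ∀ j : Fin l, ZMod (s j) =>
    ∃ m : ℤ, ∀ j, e₂ j = e₁ j + (m : ZMod (s j))))

/-- The number of connected components of `Ξ_{\vec s}` (away from the cone point, i.e.
on the locus `λ ≠ 0`) equals the number of diagonal-translation orbits; two points over
the same `λ ≠ 0` lie in the same connected component iff their tuples of roots differ by
the diagonal action; and `Ξ_{\vec s}` is topologically a wedge of that many copies of `ℂ`
glued at the origin. -/
theorem stmt0 (l : ℕ) (s : Fin l → ℕ) (hs : ∀ j, 0 < s j) :
    Nat.card (ConnectedComponents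
        {x : (Fin l → ℂ) × ℂ // (∀ j, x.1 j ^ s j = x.2) ∧ x.2 ≠ 0})
      = diagOrbitCount l s ∧
    (∀ x y : {x : (Fin l → ℂ) × ℂ // (∀ j, x.1 j ^ s j = x.2) ∧ x.2 ≠ 0},
      x.1.2 = y.1.2 →
      (ConnectedComponents.mk x = ConnectedComponents.mk y ↔
        ∃ m : ℤ, ∀ j, y.1.1 j
          = Complex.exp (2 * (Real.pi : ℂ) * Complex.I * (m : ℂ) / (s j : ℂ)) * x.1.1 j)) ∧
    Nonempty
      ({x : (Fin l → ℂ) × ℂ // ∀ j, x.1 j ^ s j = x.2} ≃ₜ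
        Quot (fun p q : Fin (diagOrbitCount l s) × ℂ => p = q ∨ (p.2 = 0 ∧ q.2 = 0))) := by
  classical
  haveI : ∀ j, NeZero (s j) := fun j => ⟨(hs j).ne'⟩
  set n := diagOrbitCount l s with hn
  set r : (∀ j : Fin l, ZMod (s j)) → (∀ j : Fin l, ZMod (s j)) → Prop :=
    fun e₁ e₂ => ∃ m : ℤ, ∀ j, e₂ j = e₁ j + (m : ZMod (s j)) with hr
  have hrequiv : Equivalence r := by
    constructor
    · intro e; exact ⟨0, fun j => by simp⟩
    · rintro a b ⟨m, hm⟩; exact ⟨-m, fun j => by rw [hm j]; push_cast; ring⟩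
    · rintro a b c ⟨m, hm⟩ ⟨m', hm'⟩
      exact ⟨m + m', fun j => by rw [hm' j, hm j]; push_cast; ring⟩
  have hcard : Nat.card (Quot r) = n := rfl
  have eO : Quot r ≃ Fin n := Finite.equivFinOfCardEq hcard
  set rep : Fin n → (∀ j : Fin l, ZMod (s j)) := fun i => (eO.symm i).out with hrepdef
  have hrep : ∀ i, Quot.mk r (rep i) = eO.symm i := fun i => Quot.out_eq _
  set N : ℕ := Finset.univ.lcm s with hNdef
  have hNdvd : ∀ j, s j ∣ N := fun j => Finset.dvd_lcm (Finset.mem_univ j)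
  have hN0 : N ≠ 0 := by
    intro h
    rw [hNdef, Finset.lcm_eq_zero_iff] at h
    obtain ⟨j, -, hj⟩ := h
    exact (hs j).ne' hj
  haveI : NeZero N := ⟨hN0⟩
  have hdiv0 : ∀ j, N / s j ≠ 0 := by
    intro j h
    exact hN0 (by rw [← Nat.div_mul_cancel (hNdvd j), h, zero_mul])
  set ζ : Fin l → ℂ := fun j => Complex.exp (2 * (Real.pi : ℂ) * Complex.I / (s j : ℂ)) with hζdef
  have hζ : ∀ j, IsPrimitiveRoot (ζ j) (s j) := fun j => Complex.isPrimitiveRoot_exp _ (hs j).ne'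
  have hζne : ∀ j, ζ j ≠ 0 := fun j => (hζ j).ne_zero (hs j).ne'
  set ω : ℂ := Complex.exp (2 * (Real.pi : ℂ) * Complex.I / (N : ℂ)) with hωdef
  have hω : IsPrimitiveRoot ω N := Complex.isPrimitiveRoot_exp _ hN0
  have hωne : ω ≠ 0 := hω.ne_zero hN0
  have hexpz : ∀ j (m : ℤ),
      Complex.exp (2 * (Real.pi : ℂ) * Complex.I * (m : ℂ) / (s j : ℂ)) = ζ j ^ m := by
    intro j m
    rw [hζdef]
    rw [← Complex.exp_int_mul]
    congr 1
    ring
  have hωpow : ∀ j, ω ^ (N / s j) = ζ j := by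
    intro j
    rw [hωdef, hζdef, ← Complex.exp_nat_mul]
    congr 1
    have hcast : ((N / s j : ℕ) : ℂ) = (N : ℂ) / (s j : ℂ) :=
      Nat.cast_div (hNdvd j) (Nat.cast_ne_zero.mpr (hs j).ne')
    rw [hcast]
    field_simp
  -- the basic map
  set Φa : Fin n × ℂ → (Fin l → ℂ) × ℂ :=
    fun p => (fun j => ζ j ^ (((rep p.1 j).val : ℤ)) * p.2 ^ (N / s j), p.2 ^ N) with hΦa
  have hmem : ∀ p, ∀ j, (Φa p).1 j ^ s j = (Φa p).2 := by
    intro p j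
    have h1 : ζ j ^ ((s j : ℤ)) = 1 := by rw [zpow_natCast]; exact (hζ j).pow_eq_one
    have : ((ζ j ^ (((rep p.1 j).val : ℤ))) ^ s j) = 1 := by
      rw [← zpow_natCast (ζ j ^ (((rep p.1 j).val : ℤ))) (s j), ← zpow_mul, mul_comm, zpow_mul,
        h1, one_zpow]
    simp only [hΦa, mul_pow, this, one_mul, ← pow_mul, Nat.div_mul_cancel (hNdvd j)]
  have hmix : ∀ (j : Fin l) (m : ℤ) (t : ℂ), (ω ^ m * t) ^ (N / s j) = ζ j ^ m * t ^ (N / s j) := by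
    intro j m t
    rw [mul_pow]
    congr 1
    rw [← zpow_natCast (ω ^ m) (N / s j), ← zpow_mul, mul_comm m, zpow_mul, zpow_natCast, hωpow j]
  have hmixN : ∀ (m : ℤ) (t : ℂ), (ω ^ m * t) ^ N = t ^ N := by
    intro m t
    rw [mul_pow, ← zpow_natCast (ω ^ m) N, ← zpow_mul, mul_comm m, zpow_mul, zpow_natCast,
      hω.pow_eq_one, one_zpow, one_mul]
  have hzeroΦ : ∀ i, Φa (i, 0) = (0, 0) := by
    intro i
    refine Prod.ext ?_ ?_
    · funext j
      simp only [hΦa, zero_pow (hdiv0 j), mul_zero]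
      rfl
    · simp only [hΦa, zero_pow hN0]
  have hinj : ∀ p q : Fin n × ℂ, Φa p = Φa q → (p = q) ∨ (p.2 = 0 ∧ q.2 = 0) := by
    rintro ⟨i, t⟩ ⟨i', t'⟩ h
    have h2 : t ^ N = t' ^ N := congrArg Prod.snd h
    have h1 : ∀ j, ζ j ^ (((rep i j).val : ℤ)) * t ^ (N / s j)
        = ζ j ^ (((rep i' j).val : ℤ)) * t' ^ (N / s j) := fun j =>
      congrFun (congrArg Prod.fst h) j
    by_cases ht : t = 0
    · right
      refine ⟨ht, ?_⟩
      have : t' ^ N = 0 := by rw [← h2, ht, zero_pow hN0]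
      exact pow_eq_zero_iff hN0 |>.mp this
    · left
      have ht' : t' ≠ 0 := by
        intro h0
        apply ht
        have : t ^ N = 0 := by rw [h2, h0, zero_pow hN0]
        exact pow_eq_zero_iff hN0 |>.mp this
      have hdiv : (t' / t) ^ N = 1 := by
        rw [div_pow, ← h2, div_self (pow_ne_zero _ ht)]
      obtain ⟨k, hk, hωk⟩ := hω.eq_pow_of_pow_eq_one hdiv
      have ht'e : t' = ω ^ ((k : ℤ)) * t := by
        rw [zpow_natCast, hωk]
        field_simp
      have hcoord : ∀ j, rep i' j + (((k : ℤ)) : ZMod (s j)) = rep i j := by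
        intro j
        refine aux_val_inj (hζ j) ?_
        have hthis := h1 j
        rw [ht'e, hmix j] at hthis
        have hc : ζ j ^ (((rep i j).val : ℤ))
            = ζ j ^ (((rep i' j).val : ℤ)) * ζ j ^ ((k : ℤ)) := by
          apply mul_right_cancel₀ (pow_ne_zero (N / s j) ht)
          rw [mul_assoc]
          exact hthis
        rw [aux_shift (hζ j)]
        exact hc.symm
      have hii : i' = i := by
        apply eO.symm.injective
        rw [← hrep, ← hrep]
        exact Quot.sound ⟨(k : ℤ), fun j => (hcoord j).symm⟩
      subst hii
      have hdvd : ∀ j, s j ∣ k := by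
        intro j
        have h0 : (((k : ℤ)) : ZMod (s j)) = 0 := by
          have := hcoord j
          exact (add_eq_left).mp this
        have := (ZMod.intCast_zmod_eq_zero_iff_dvd (k : ℤ) (s j)).mp h0
        exact_mod_cast this
      have hNk : N ∣ k := Finset.lcm_dvd fun j _ => hdvd j
      have hωk1 : ω ^ k = 1 := (hω.pow_eq_one_iff_dvd k).mpr hNk
      have htt : t' = t := by rw [ht'e, zpow_natCast, hωk1, one_mul]
      rw [htt]
  have hnpos : 0 < n := by
    rw [← hcard]
    haveI : Nonempty (Quot r) := ⟨Quot.mk r (fun _ => 0)⟩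
    exact Nat.card_pos
  have hsurj : ∀ x : (Fin l → ℂ) × ℂ, (∀ j, x.1 j ^ s j = x.2) → ∃ p, Φa p = x := by
    rintro ⟨μ, lam⟩ hx
    simp only at hx
    obtain ⟨t, ht⟩ := IsAlgClosed.exists_pow_nat_eq lam (Nat.pos_of_ne_zero hN0)
    by_cases hlam : lam = 0
    · refine ⟨(⟨0, hnpos⟩, 0), ?_⟩
      have hμ : μ = 0 := funext fun j =>
        pow_eq_zero_iff (hs j).ne' |>.mp (by rw [hx j, hlam])
      rw [hzeroΦ _, hμ, hlam]
    · have ht0 : t ≠ 0 := fun h0 => hlam (by rw [← ht, h0, zero_pow hN0])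
      have hT : ∀ j, t ^ (N / s j) ≠ 0 := fun j => pow_ne_zero _ ht0
      have hroot : ∀ j, ∃ kj : ℕ, kj < s j ∧ ζ j ^ kj = μ j / t ^ (N / s j) := by
        intro j
        have h1 : (μ j / t ^ (N / s j)) ^ s j = 1 := by
          rw [div_pow, hx j, ← pow_mul, Nat.div_mul_cancel (hNdvd j), ht, div_self hlam]
        obtain ⟨kj, hkj, hkeq⟩ := (hζ j).eq_pow_of_pow_eq_one h1
        exact ⟨kj, hkj, hkeq⟩
      choose kk hkk hkeq using hroot
      set e : ∀ j, ZMod (s j) := fun j => ((kk j : ℕ) : ZMod (s j)) with he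
      set i : Fin n := eO (Quot.mk r e) with hi
      have hmk : Quot.mk r (rep i) = Quot.mk r e := by rw [hrep, hi, Equiv.symm_apply_apply]
      have hrel : r (rep i) e := (hrequiv.eqvGen_iff).mp (Quot.eq.mp hmk)
      obtain ⟨m, hm⟩ := hrel
      refine ⟨(i, ω ^ m * t), ?_⟩
      have h2 : (ω ^ m * t) ^ N = lam := by rw [hmixN, ht]
      refine Prod.ext ?_ h2
      funext j
      show ζ j ^ (((rep i j).val : ℤ)) * (ω ^ m * t) ^ (N / s j) = μ j
      rw [hmix j]
      have hval : (e j).val = kk j := ZMod.val_cast_of_lt (hkk j)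
      have hsh : ζ j ^ (((rep i j).val : ℤ)) * ζ j ^ m = ζ j ^ (kk j) := by
        rw [← aux_shift (hζ j) (rep i j) m, ← hm j, hval, zpow_natCast]
      rw [← mul_assoc, hsh, (div_eq_iff (hT j)).mp (hkeq j).symm]
  -- topology
  set Φ : Fin n × ℂ → {x : (Fin l → ℂ) × ℂ // ∀ j, x.1 j ^ s j = x.2} :=
    fun p => ⟨Φa p, hmem p⟩ with hΦ
  have hconta : Continuous Φa := by
    rw [hΦa]
    apply Continuous.prodMk
    · exact continuous_pi fun j =>
        ((continuous_of_discreteTopology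
          (f := fun i : Fin n => ζ j ^ (((rep i j).val : ℤ)))).comp continuous_fst).mul
          (continuous_snd.pow _)
    · exact continuous_snd.pow N
  have hcont : Continuous Φ := hconta.subtype_mk _
  set relQ : Fin n × ℂ → Fin n × ℂ → Prop :=
    fun p q => p = q ∨ (p.2 = 0 ∧ q.2 = 0) with hrelQ
  have hresp : ∀ p q, relQ p q → Φ p = Φ q := by
    rintro ⟨i, t⟩ ⟨i', t'⟩ (h | ⟨h1, h2⟩)
    · rw [h]
    · simp only at h1 h2
      subst h1; subst h2
      apply Subtype.ext
      show Φa (i, 0) = Φa (i', 0)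
      rw [hzeroΦ, hzeroΦ]
  set Φq : Quot relQ → {x : (Fin l → ℂ) × ℂ // ∀ j, x.1 j ^ s j = x.2} :=
    Quot.lift Φ hresp with hΦq
  have hcontq : Continuous Φq := continuous_quot_lift _ hcont
  have hbij : Function.Bijective Φq := by
    constructor
    · intro q1 q2 h
      obtain ⟨p1, rfl⟩ := Quot.exists_rep q1
      obtain ⟨p2, rfl⟩ := Quot.exists_rep q2
      have hval : Φa p1 = Φa p2 := Subtype.ext_iff.mp (show Φ p1 = Φ p2 from h)
      rcases hinj _ _ hval with rfl | ⟨h1, h2⟩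
      · rfl
      · exact Quot.sound (Or.inr ⟨h1, h2⟩)
    · intro x
      obtain ⟨p, hp⟩ := hsurj x.1 x.2
      refine ⟨Quot.mk _ p, ?_⟩
      show Φ p = x
      exact Subtype.ext hp
  have hKpre : ∀ K : Set ((Fin l → ℂ) × ℂ), IsCompact K → IsCompact (Φa ⁻¹' K) := by
    intro K hK
    obtain ⟨M, hM⟩ : ∃ M, ∀ x ∈ K, ‖x.2‖ ≤ M := by
      obtain ⟨M, hM⟩ := (hK.image (continuous_norm.comp continuous_snd)).bddAbove
      exact ⟨M, fun x hx => hM (Set.mem_image_of_mem _ hx)⟩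
    have hsub : Φa ⁻¹' K ⊆ Set.univ ×ˢ Metric.closedBall (0 : ℂ) (max 1 M) := by
      rintro ⟨i, t⟩ hp
      refine ⟨Set.mem_univ _, ?_⟩
      simp only [Metric.mem_closedBall, dist_zero_right]
      by_contra hgt
      push_neg at hgt
      have h1 : (1 : ℝ) ≤ ‖t‖ := le_of_lt (lt_of_le_of_lt (le_max_left _ _) hgt)
      have h2 : ‖t‖ ≤ ‖t‖ ^ N := le_self_pow₀ h1 hN0
      have h3 : ‖(Φa (i, t)).2‖ ≤ M := hM _ hp
      have h4 : ‖t‖ ^ N ≤ M := by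
        rw [show (Φa (i, t)).2 = t ^ N from rfl, norm_pow] at h3
        exact h3
      have h5 := lt_of_le_of_lt (le_max_right 1 M) hgt
      linarith [le_trans h2 h4]
    exact IsCompact.of_isClosed_subset (isCompact_univ.prod (isCompact_closedBall _ _))
      (hK.isClosed.preimage hconta) hsub
  have hproper : IsProperMap Φa := isProperMap_iff_isCompact_preimage.mpr ⟨hconta, hKpre⟩
  have hclosedamb : IsClosedMap Φa := hproper.isClosedMap
  have hclosedΦ : IsClosedMap Φ := by
    intro C hC
    have himg : Φ '' C = Subtype.val ⁻¹' (Φa '' C) := by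
      ext x
      constructor
      · rintro ⟨p, hp, rfl⟩; exact ⟨p, hp, rfl⟩
      · rintro ⟨p, hp, hval⟩; exact ⟨p, hp, Subtype.ext hval⟩
    rw [himg]
    exact (hclosedamb C hC).preimage continuous_subtype_val
  have hclosedq : IsClosedMap Φq := by
    intro C hC
    have himg : Φq '' C = Φ '' (Quot.mk relQ ⁻¹' C) := by
      ext x
      constructor
      · rintro ⟨q, hq, rfl⟩
        obtain ⟨p, rfl⟩ := Quot.exists_rep q
        exact ⟨p, hq, rfl⟩
      · rintro ⟨p, hp, rfl⟩
        exact ⟨Quot.mk _ p, hp, rfl⟩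
    rw [himg]
    exact hclosedΦ _ (hC.preimage continuous_quot_mk)
  have hopenq : IsOpenMap Φq := by
    intro U hU
    have h1 := hclosedq Uᶜ hU.isClosed_compl
    rw [Set.image_compl_eq hbij] at h1
    simpa using h1.isOpen_compl
  have homeo : Quot relQ ≃ₜ {x : (Fin l → ℂ) × ℂ // ∀ j, x.1 j ^ s j = x.2} :=
    (Equiv.ofBijective Φq hbij).toHomeomorphOfContinuousOpen hcontq hopenq
  -- branch sets in the punctured variety
  set ι : {x : (Fin l → ℂ) × ℂ // (∀ j, x.1 j ^ s j = x.2) ∧ x.2 ≠ 0} →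
      {x : (Fin l → ℂ) × ℂ // ∀ j, x.1 j ^ s j = x.2} := fun x => ⟨x.1, x.2.1⟩ with hι
  have hιcont : Continuous ι := continuous_subtype_val.subtype_mk _
  set B : Fin n → Set {x : (Fin l → ℂ) × ℂ // (∀ j, x.1 j ^ s j = x.2) ∧ x.2 ≠ 0} :=
    fun i => {x | ∃ t : ℂ, t ≠ 0 ∧ ι x = Φ (i, t)} with hB
  set g : Fin n → ℂ → {x : (Fin l → ℂ) × ℂ // (∀ j, x.1 j ^ s j = x.2) ∧ x.2 ≠ 0} :=
    fun i w => ⟨Φa (i, Complex.exp w),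
      fun j => hmem (i, Complex.exp w) j, pow_ne_zero _ (Complex.exp_ne_zero w)⟩ with hg
  have hιg : ∀ i w, ι (g i w) = Φ (i, Complex.exp w) := fun i w => rfl
  have hginB : ∀ i w, g i w ∈ B i := fun i w => ⟨Complex.exp w, Complex.exp_ne_zero w, hιg i w⟩
  have hιinj : Function.Injective ι := by
    intro a b h
    have h2 := congrArg Subtype.val h
    exact Subtype.ext h2
  have hBrange : ∀ i, B i = Set.range (g i) := by
    intro i
    ext x
    constructor
    · rintro ⟨t, ht, hxt⟩
      have htr : t ∈ Set.range Complex.exp := by rw [Complex.range_exp]; exact ht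
      obtain ⟨w, hw⟩ := htr
      refine ⟨w, hιinj ?_⟩
      rw [hιg, hw, ← hxt]
    · rintro ⟨w, rfl⟩
      exact hginB i w
  have hgcont : ∀ i, Continuous (g i) := fun i =>
    (hconta.comp (continuous_const.prodMk Complex.continuous_exp)).subtype_mk _
  have hBconn : ∀ i, IsConnected (B i) := by
    intro i
    rw [hBrange]
    exact isConnected_range (hgcont i)
  have hequivQ : Equivalence relQ := by
    constructor
    · exact fun p => Or.inl rfl
    · rintro p q (rfl | ⟨h1, h2⟩)
      · exact Or.inl rfl
      · exact Or.inr ⟨h2, h1⟩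
    · rintro p q u (rfl | ⟨h1, h2⟩) h
      · exact h
      · rcases h with rfl | ⟨h3, h4⟩
        · exact Or.inr ⟨h1, h2⟩
        · exact Or.inr ⟨h1, h4⟩
  have hBopen : ∀ i, IsOpen (B i) := by
    intro i
    have hsat : Quot.mk relQ ⁻¹' (Quot.mk relQ '' ({i} ×ˢ {t : ℂ | t ≠ 0}))
        = {i} ×ˢ {t : ℂ | t ≠ 0} := by
      ext ⟨i1, t1⟩
      simp only [Set.mem_preimage, Set.mem_image, Set.mem_prod, Set.mem_singleton_iff,
        Set.mem_setOf_eq]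
      constructor
      · rintro ⟨⟨i0, t0⟩, ⟨hi0, ht0⟩, heq⟩
        have hrel2 : relQ (i0, t0) (i1, t1) := hequivQ.eqvGen_iff.mp (Quot.eq.mp heq)
        rcases hrel2 with heq2 | ⟨hz, _⟩
        · cases heq2
          exact ⟨hi0, ht0⟩
        · exact absurd hz ht0
      · rintro ⟨h1, h2⟩
        exact ⟨(i1, t1), ⟨h1, h2⟩, rfl⟩
    have hSopen : IsOpen (Quot.mk relQ '' ({i} ×ˢ {t : ℂ | t ≠ 0})) := by
      rw [isQuotientMap_quot_mk.isOpen_preimage.symm, hsat]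
      exact (isOpen_discrete _).prod isOpen_ne
    have himg_open : IsOpen (Φq '' (Quot.mk relQ '' ({i} ×ˢ {t : ℂ | t ≠ 0}))) :=
      hopenq _ hSopen
    have hcomp2 : Φq '' (Quot.mk relQ '' ({i} ×ˢ {t : ℂ | t ≠ 0}))
        = Φ '' ({i} ×ˢ {t : ℂ | t ≠ 0}) := by
      rw [← Set.image_comp]
      rfl
    rw [hcomp2] at himg_open
    have hBeq : B i = ι ⁻¹' (Φ '' ({i} ×ˢ {t : ℂ | t ≠ 0})) := by
      ext x
      simp only [hB, Set.mem_setOf_eq, Set.mem_preimage, Set.mem_image, Set.mem_prod,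
        Set.mem_singleton_iff]
      constructor
      · rintro ⟨t, ht, hxt⟩
        exact ⟨(i, t), ⟨rfl, ht⟩, hxt.symm⟩
      · rintro ⟨⟨i0, t⟩, ⟨rfl, ht⟩, heq⟩
        exact ⟨t, ht, heq.symm⟩
    rw [hBeq]
    exact himg_open.preimage hιcont
  have hcover : ∀ x : {x : (Fin l → ℂ) × ℂ // (∀ j, x.1 j ^ s j = x.2) ∧ x.2 ≠ 0},
      ∃ i, x ∈ B i := by
    intro x
    obtain ⟨⟨i, t⟩, hp⟩ := hsurj x.1 x.2.1
    have ht : t ≠ 0 := by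
      intro h0
      apply x.2.2
      rw [← congrArg Prod.snd hp]
      subst h0
      rw [hzeroΦ]
    exact ⟨i, t, ht, Subtype.ext hp.symm⟩
  have hdisj : ∀ x i i', x ∈ B i → x ∈ B i' → i = i' := by
    rintro x i i' ⟨t, ht, hxt⟩ ⟨t', ht', hxt'⟩
    have hval : Φa (i, t) = Φa (i', t') :=
      Subtype.ext_iff.mp (show Φ (i, t) = Φ (i', t') by rw [← hxt, ← hxt'])
    rcases hinj _ _ hval with heq | ⟨h1, _⟩
    · exact congrArg Prod.fst heq
    · exact absurd h1 ht
  have hclopen : ∀ i, IsClopen (B i) := by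
    intro i
    have hcompl : (B i)ᶜ = ⋃ i' ∈ ({i}ᶜ : Set (Fin n)), B i' := by
      ext x
      simp only [Set.mem_compl_iff, Set.mem_iUnion, Set.mem_singleton_iff, exists_prop]
      constructor
      · intro hx
        obtain ⟨i', hi'⟩ := hcover x
        exact ⟨i', fun h => hx (h ▸ hi'), hi'⟩
      · rintro ⟨i', hne, hx'⟩ hx
        exact hne (hdisj x i' i hx' hx)
    refine ⟨?_, hBopen i⟩
    rw [← isOpen_compl_iff, hcompl]
    exact isOpen_biUnion fun i' _ => hBopen i'
  have hcomp : ∀ i, ∀ x ∈ B i, connectedComponent x = B i := fun i x hx =>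
    subset_antisymm ((hclopen i).connectedComponent_subset hx)
      ((hBconn i).subset_connectedComponent hx)
  have hsame : ∀ i x y, x ∈ B i → y ∈ B i →
      ConnectedComponents.mk x = ConnectedComponents.mk y := by
    intro i x y hx hy
    rw [ConnectedComponents.coe_eq_coe']
    rw [hcomp i y hy]
    exact hx
  refine ⟨?_, ?_, ⟨homeo.symm⟩⟩
  · have hbijF : Function.Bijective (fun i : Fin n => ConnectedComponents.mk (g i 0)) := by
      constructor
      · intro i i' h
        have h1 : g i 0 ∈ connectedComponent (g i' 0) := ConnectedComponents.coe_eq_coe'.mp h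
        rw [hcomp i' (g i' 0) (hginB i' 0)] at h1
        exact hdisj (g i 0) i i' (hginB i 0) h1
      · intro cc
        obtain ⟨x, rfl⟩ := ConnectedComponents.surjective_coe cc
        obtain ⟨i, hi⟩ := hcover x
        exact ⟨i, hsame i (g i 0) x (hginB i 0) hi⟩
    calc Nat.card (ConnectedComponents
          {x : (Fin l → ℂ) × ℂ // (∀ j, x.1 j ^ s j = x.2) ∧ x.2 ≠ 0})
        = Nat.card (Fin n) := (Nat.card_eq_of_bijective _ hbijF).symm
      _ = n := by rw [Nat.card_eq_fintype_card, Fintype.card_fin]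
  · intro x y hxy
    obtain ⟨i, hx⟩ := hcover x
    obtain ⟨t, ht0, hxt⟩ := hx
    have hxvals : x.1 = Φa (i, t) := congrArg Subtype.val hxt
    have hxval : ∀ j, x.1.1 j = ζ j ^ (((rep i j).val : ℤ)) * t ^ (N / s j) := fun j =>
      congrFun (congrArg Prod.fst hxvals) j
    have hxlam : x.1.2 = t ^ N := congrArg Prod.snd hxvals
    constructor
    · intro hmk
      have hyB : y ∈ B i := by
        have h1 : y ∈ connectedComponent x := ConnectedComponents.coe_eq_coe'.mp hmk.symm
        rw [hcomp i x ⟨t, ht0, hxt⟩] at h1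
        exact h1
      obtain ⟨t', ht0', hyt⟩ := hyB
      have hyvals : y.1 = Φa (i, t') := congrArg Subtype.val hyt
      have hyval : ∀ j, y.1.1 j = ζ j ^ (((rep i j).val : ℤ)) * t' ^ (N / s j) := fun j =>
        congrFun (congrArg Prod.fst hyvals) j
      have hylam : y.1.2 = t' ^ N := congrArg Prod.snd hyvals
      have h2 : t' ^ N = t ^ N := by rw [← hylam, ← hxy, hxlam]
      have hdivu : (t' / t) ^ N = 1 := by rw [div_pow, h2, div_self (pow_ne_zero _ ht0)]
      obtain ⟨k, hk, hωk⟩ := hω.eq_pow_of_pow_eq_one hdivu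
      refine ⟨(k : ℤ), fun j => ?_⟩
      rw [hexpz j]
      have ht'e : t' = ω ^ ((k : ℤ)) * t := by
        rw [zpow_natCast, hωk]
        field_simp
      rw [hyval j, ht'e, hmix j, hxval j]
      ring
    · rintro ⟨m, hm⟩
      have hyB : y ∈ B i := by
        refine ⟨ω ^ m * t, mul_ne_zero (zpow_ne_zero m hωne) ht0, ?_⟩
        apply Subtype.ext
        show y.1 = Φa (i, ω ^ m * t)
        refine Prod.ext ?_ ?_
        · funext j
          show y.1.1 j = ζ j ^ (((rep i j).val : ℤ)) * (ω ^ m * t) ^ (N / s j)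
          rw [hm j, hexpz j, hmix j, hxval j]
          ring
        · show y.1.2 = (ω ^ m * t) ^ N
          rw [hmixN, ← hxy, hxlam]
      exact hsame i x y ⟨t, ht0, hxt⟩ hyB
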